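/- Let L be a Lie algebra with G-grading and ε a solution of the graded-contraction equations. If r: L → End(V) is a representation compatible with the grading, then setting ψ_{i,j} := ε_{i,j} for all i,j yields a representation r^ε of the contracted algebra L^ε defined by r^ε(X_i)v_j = ε_{i,j} r(X_i)v_j. -/

import Mathlib

attribute [local instance 100] LieRing.ofAssociativeRing

/-- If `r` is a representation of a `G`-graded Lie algebra `L` compatible with the grading
and `ε` solves the graded-contraction equations, then the choice `ψ = ε` yields a
representation `r^ε` of the contracted algebra `L^ε`: the map defined on homogeneous
vectors by `r^ε(X_i)v_j = ε_{i,j} r(X_i)v_j` respects the contracted bracket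
`[x,y]_new = ε_{i,j}[x,y]`. -/
theorem stmt_5 (G : Type*) [AddCommSemigroup G] [DecidableEq G]
    (L : Type*) [LieRing L] [LieAlgebra ℂ L]
    (V : Type*) [AddCommGroup V] [Module ℂ V]
    (Lg : G → Submodule ℂ L) (hLinternal : DirectSum.IsInternal Lg)
    (hgrading : ∀ i j : G, ∀ x ∈ Lg i, ∀ y ∈ Lg j, ⁅x, y⁆ ∈ Lg (i + j))
    (ε : G → G → ℂ) (hsymm : ∀ i j, ε i j = ε j i)
    (hε : ∀ i j k : G, ε i j * ε (i + j) k = ε j k * ε (j + k) i ∧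
      ε j k * ε (j + k) i = ε k i * ε (k + i) j)
    (b : L →ₗ[ℂ] L →ₗ[ℂ] L)
    (hb : ∀ i j : G, ∀ x ∈ Lg i, ∀ y ∈ Lg j, b x y = ε i j • ⁅x, y⁆)
    (r : L →ₗ⁅ℂ⁆ Module.End ℂ V)
    (Vg : G → Submodule ℂ V) (hVinternal : DirectSum.IsInternal Vg)
    (hcompat : ∀ i j : G, ∀ x ∈ Lg i, ∀ v ∈ Vg j, r x v ∈ Vg (i + j))
    (s : L →ₗ[ℂ] Module.End ℂ V)
    (hs : ∀ i j : G, ∀ x ∈ Lg i, ∀ v ∈ Vg j, s x v = ε i j • r x v) :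
    ∀ x y : L, s (b x y) = ⁅s x, s y⁆ := by
  have key : ∀ (i j k : G), ∀ x ∈ Lg i, ∀ y ∈ Lg j, ∀ v ∈ Vg k,
      s (b x y) v = s x (s y v) - s y (s x v) := by
    intro i j k x hx y hy v hv
    have hxy : ⁅x, y⁆ ∈ Lg (i + j) := hgrading i j x hx y hy
    have hry : r y v ∈ Vg (j + k) := hcompat j k y hy v hv
    have hrx : r x v ∈ Vg (i + k) := hcompat i k x hx v hv
    have h1 : s ⁅x, y⁆ v = ε (i + j) k • r ⁅x, y⁆ v := hs (i + j) k _ hxy v hv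
    have h2 : s y v = ε j k • r y v := hs j k y hy v hv
    have h3 : s x v = ε i k • r x v := hs i k x hx v hv
    have h4 : s x (r y v) = ε i (j + k) • r x (r y v) := hs i (j + k) x hx _ hry
    have h5 : s y (r x v) = ε j (i + k) • r y (r x v) := hs j (i + k) y hy _ hrx
    have hlie : r ⁅x, y⁆ = ⁅r x, r y⁆ := r.map_lie x y
    have e1 : ε i j * ε (i + j) k = ε j k * ε i (j + k) := by
      rw [(hε i j k).1, hsymm (j + k) i]
    have e2 : ε i j * ε (i + j) k = ε i k * ε j (i + k) := by
      rw [(hε i j k).1, (hε i j k).2, hsymm k i, add_comm k i, hsymm (i + k) j]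
    rw [hb i j x hx y hy, map_smul, LinearMap.smul_apply, h1, hlie, h2, h3,
      map_smul (s x), map_smul (s y), h4, h5, Ring.lie_def]
    simp only [LinearMap.sub_apply, Module.End.mul_apply, smul_sub, smul_smul]
    rw [← e1, e2]
  intro x y
  ext v
  have hv : v ∈ ⨆ k, Vg k := by rw [hVinternal.submodule_iSup_eq_top]; trivial
  rw [Ring.lie_def, LinearMap.sub_apply, Module.End.mul_apply, Module.End.mul_apply]
  induction hv using Submodule.iSup_induction' with
  | mem k v hv =>
    have hx : x ∈ ⨆ i, Lg i := by rw [hLinternal.submodule_iSup_eq_top]; trivial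
    induction hx using Submodule.iSup_induction' with
    | mem i x hx =>
      have hy : y ∈ ⨆ j, Lg j := by rw [hLinternal.submodule_iSup_eq_top]; trivial
      induction hy using Submodule.iSup_induction' with
      | mem j y hy => exact key i j k x hx y hy v hv
      | zero => simp
      | add y₁ hy₁ y₂ hy₂ ih1 ih2 =>
        simp only [map_add, LinearMap.add_apply] at *
        rw [ih1, ih2]; abel
    | zero => simp
    | add x₁ hx₁ x₂ hx₂ ih1 ih2 =>
      simp only [map_add, LinearMap.add_apply] at *
      rw [ih1, ih2]; abel
  | zero => simp
  | add v₁ hv₁ v₂ hv₂ ih1 ih2 =>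
    simp only [map_add] at *
    rw [ih1, ih2]; abel
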